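/- Suppose the pushforward of the measure p(x)dx under r(x) := p(x)/g(x) is compactly supported inside (0,∞) and is the sum of an absolutely continuous measure and finitely many atoms. Let v̄, w ≥ 0 satisfy min{(1−γ)·∫_X r(x)^α g(x)dx + c, v̄} ≥ (1−γ)·sup_{x∈X} r(x)^α. Then every equilibrium with GenAI available under the revenue-threshold scheme (v̄, w) equals (β ≡ 1, q = g); and (β ≡ 1, q = g) is the unique equilibrium if either the displayed inequality is strict or v̄ + w ≤ (1−γ)·∫_X r(x)^α g(x)dx + c. -/

import Mathlib

open MeasureTheory Real Set Filter Topology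
open scoped ENNReal

noncomputable section

namespace GenAIPlatform

/-- `D(X)`: upper-semicontinuous densities on `X` with a positive lower bound. -/
def DSet {d : ℕ} (X : Set (Fin d → ℝ)) : Set ((Fin d → ℝ) → ℝ) :=
  {q | UpperSemicontinuousOn q X ∧ ∃ ε : ℝ, 0 < ε ∧ ∀ x ∈ X, ε ≤ q x}

/-- `P(X)`: probability densities on `X`. -/
def PSet {d : ℕ} (X : Set (Fin d → ℝ)) : Set ((Fin d → ℝ) → ℝ) :=
  {q | q ∈ DSet X ∧ ∫ x in X, q x = 1}

/-- The revenue `V(y;q)` of content `y` under content density `q`. -/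
def Rev {d : ℕ} (p : (Fin d → ℝ) → ℝ) (α γ : ℝ) (q : (Fin d → ℝ) → ℝ)
    (y : Fin d → ℝ) : ℝ :=
  (1 - γ) * (p y / q y) ^ α

/-- A compensation scheme `W(x;q)`. -/
abbrev Scheme (d : ℕ) := (Fin d → ℝ) → ((Fin d → ℝ) → ℝ) → ℝ

/-- Compensated revenue `V^W(y;q)`. -/
def RevW {d : ℕ} (p : (Fin d → ℝ) → ℝ) (α γ : ℝ) (W : Scheme d)
    (q : (Fin d → ℝ) → ℝ) (y : Fin d → ℝ) : ℝ :=
  Rev p α γ q y + W y q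

/-- Profit from manual creation `U^W(x;q)`. -/
def UtilW {d : ℕ} (p : (Fin d → ℝ) → ℝ) (α γ c : ℝ) (W : Scheme d)
    (q : (Fin d → ℝ) → ℝ) (x : Fin d → ℝ) : ℝ :=
  RevW p α γ W q x - c

/-- Expected compensated revenue from GenAI `V^W(g;q)`. -/
def RevWg {d : ℕ} (X : Set (Fin d → ℝ)) (p g : (Fin d → ℝ) → ℝ) (α γ : ℝ)
    (W : Scheme d) (q : (Fin d → ℝ) → ℝ) : ℝ :=
  ∫ y in X, RevW p α γ W q y * g y

/-- The revenue-threshold compensation scheme `(v, w)`. -/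
def Wthr {d : ℕ} (p : (Fin d → ℝ) → ℝ) (α γ v w : ℝ) : Scheme d :=
  fun x q => if v ≤ Rev p α γ q x then w else 0

/-- Platform profit `Π^W(q)` (per consumer). -/
def Profit {d : ℕ} (X : Set (Fin d → ℝ)) (p : (Fin d → ℝ) → ℝ) (α γ : ℝ)
    (W : Scheme d) (q : (Fin d → ℝ) → ℝ) : ℝ :=
  γ * ∫ x in X, p x ^ α * q x ^ (1 - α) - ∫ x in X, W x q * q x

/-- Mean-field equilibrium with GenAI available: `β` is the GenAI-usage propensity,
`q` the content density. -/
def IsEquilibrium {d : ℕ} (X : Set (Fin d → ℝ)) (p g : (Fin d → ℝ) → ℝ)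
    (α γ c : ℝ) (W : Scheme d) (β q : (Fin d → ℝ) → ℝ) : Prop :=
  (∀ x ∈ X, β x ∈ Icc (0 : ℝ) 1) ∧ q ∈ DSet X ∧
  (∀ x ∈ X, RevWg X p g α γ W q < UtilW p α γ c W q x → β x = 0) ∧
  (∀ x ∈ X, UtilW p α γ c W q x < RevWg X p g α γ W q → β x = 1) ∧
  (∀ x ∈ X, q x = (1 - β x) * p x + g x * ∫ y in X, β y * p y)

/-- The pushforward of the measure `p(x)dx` on `X` under `r(x) := p(x)/g(x)`. -/
def pushR {d : ℕ} (X : Set (Fin d → ℝ)) (p g : (Fin d → ℝ) → ℝ) : Measure ℝ :=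
  Measure.map (fun x => p x / g x)
    ((volume.restrict X).withDensity fun x => ENNReal.ofReal (p x))

variable {d : ℕ}

private lemma usc_inter_open {X : Set (Fin d → ℝ)} {f : (Fin d → ℝ) → ℝ}
    (hf : UpperSemicontinuousOn f X) (t : ℝ) :
    ∃ U : Set (Fin d → ℝ), IsOpen U ∧ X ∩ U = {x | x ∈ X ∧ f x < t} := by
  classical
  have key : ∀ x : Fin d → ℝ, ∃ U : Set (Fin d → ℝ),
      IsOpen U ∧ ((x ∈ X ∧ f x < t) → (x ∈ U ∧ ∀ y ∈ U ∩ X, f y < t)) := by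
    intro x
    by_cases hx : x ∈ X ∧ f x < t
    · have h := hf x hx.1 t hx.2
      rw [eventually_iff, mem_nhdsWithin] at h
      obtain ⟨u, hu, hxu, hsub⟩ := h
      exact ⟨u, hu, fun _ => ⟨hxu, fun y hy => hsub hy⟩⟩
    · exact ⟨∅, isOpen_empty, fun h => absurd h hx⟩
  choose U hUopen hU using key
  refine ⟨⋃ x ∈ {x | x ∈ X ∧ f x < t}, U x,
    isOpen_biUnion fun x _ => hUopen x, ?_⟩
  ext y
  constructor
  · rintro ⟨hyX, hyU⟩
    simp only [mem_iUnion] at hyU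
    obtain ⟨x, hx, hyUx⟩ := hyU
    exact ⟨hyX, (hU x hx).2 y ⟨hyUx, hyX⟩⟩
  · rintro ⟨hyX, hyf⟩
    exact ⟨hyX, mem_iUnion₂.2 ⟨y, ⟨hyX, hyf⟩, (hU y ⟨hyX, hyf⟩).1⟩⟩

private lemma usc_aemeasurable {X : Set (Fin d → ℝ)} {f : (Fin d → ℝ) → ℝ}
    (hX : MeasurableSet X) (hf : UpperSemicontinuousOn f X) :
    AEMeasurable f (volume.restrict X) := by
  classical
  have hFmeas : Measurable (fun x => if x ∈ X then f x else 0) := by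
    apply measurable_of_Iio
    intro t
    obtain ⟨U, hUopen, hUeq⟩ := usc_inter_open hf t
    have heq : (fun x => if x ∈ X then f x else 0) ⁻¹' Iio t =
        (X ∩ U) ∪ (Xᶜ ∩ (if (0:ℝ) < t then univ else ∅)) := by
      rw [hUeq]
      ext y
      by_cases hy : y ∈ X <;> by_cases ht : (0:ℝ) < t <;>
        simp [hy, ht]
    rw [heq]
    refine (hX.inter hUopen.measurableSet).union (hX.compl.inter ?_)
    split <;> simp
  refine ⟨_, hFmeas, ?_⟩
  rw [EventuallyEq, ae_restrict_iff' hX]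
  exact Eventually.of_forall fun x hx => by simp [hx]

private lemma usc_bddAbove {X : Set (Fin d → ℝ)} {f : (Fin d → ℝ) → ℝ}
    (hXc : IsCompact X) (hf : UpperSemicontinuousOn f X) :
    ∃ C : ℝ, ∀ x ∈ X, f x ≤ C := by
  choose U hUopen hUeq using fun n : ℕ => usc_inter_open hf n
  have hcover : X ⊆ ⋃ n : ℕ, U n := by
    intro x hx
    obtain ⟨n, hn⟩ := exists_nat_gt (f x)
    have hxn : x ∈ X ∩ U n := by
      rw [hUeq n]; exact ⟨hx, hn⟩
    exact mem_iUnion.2 ⟨n, hxn.2⟩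
  obtain ⟨s, hs⟩ := hXc.elim_finite_subcover U hUopen hcover
  refine ⟨((s.sup id : ℕ) : ℝ), fun x hx => ?_⟩
  obtain ⟨n, hns, hxn⟩ := mem_iUnion₂.1 (hs hx)
  have hfx : f x < n := by
    have hmem : x ∈ X ∩ U n := ⟨hx, hxn⟩
    rw [hUeq n] at hmem
    exact hmem.2
  have hle : (n : ℝ) ≤ ((s.sup id : ℕ) : ℝ) := by
    exact_mod_cast Finset.le_sup (f := id) hns
  linarith

private lemma integrableOn_of_bound {X : Set (Fin d → ℝ)} (hX : MeasurableSet X)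
    (hXfin : volume X < ⊤) {f : (Fin d → ℝ) → ℝ}
    (hm : AEMeasurable f (volume.restrict X)) (C : ℝ) (hC : ∀ x ∈ X, |f x| ≤ C) :
    IntegrableOn f X := by
  have hconst : IntegrableOn (fun _ => C) X volume := by
    exact integrableOn_const hXfin.ne
  refine Integrable.mono' hconst hm.aestronglyMeasurable ?_
  rw [ae_restrict_iff' hX]
  exact Eventually.of_forall fun x hx => by rw [Real.norm_eq_abs]; exact hC x hx

private lemma aemeasurable_ite_le {μ : Measure (Fin d → ℝ)} {h : (Fin d → ℝ) → ℝ}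
    (hm : AEMeasurable h μ) (v w : ℝ) :
    AEMeasurable (fun x => if v ≤ h x then w else 0) μ := by
  obtain ⟨h', hm', heq⟩ := hm
  refine ⟨fun x => if v ≤ h' x then w else 0,
    Measurable.ite (measurableSet_le measurable_const hm') measurable_const
      measurable_const, ?_⟩
  filter_upwards [heq] with x hx
  simp only [hx]


set_option maxHeartbeats 2000000 in
private lemma part1 {d : ℕ} {X : Set (Fin d → ℝ)}
    (hXc : IsCompact X) (hX0 : 0 < volume X)
    {p g : (Fin d → ℝ) → ℝ} (hp : p ∈ PSet X) (hg : g ∈ PSet X)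
    {α γ c : ℝ} (hα : α ∈ Ioo (0 : ℝ) 1) (hγ : γ ∈ Icc (0 : ℝ) 1) (hc : 0 < c)
    {v w : ℝ} (hv : 0 ≤ v) (hw : 0 ≤ w)
    (hmin : (1 - γ) * sSup ((fun x => (p x / g x) ^ α) '' X) ≤
      min ((1 - γ) * (∫ x in X, (p x / g x) ^ α * g x) + c) v)
    (β q : (Fin d → ℝ) → ℝ)
    (heq : IsEquilibrium X p g α γ c (Wthr p α γ v w) β q) :
    (∀ x ∈ X, β x = 1) ∧ ∀ x ∈ X, q x = g x := by
  obtain ⟨⟨hpUSC, εp, hεp, hplb⟩, hpInt⟩ := hp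
  obtain ⟨⟨hgUSC, εg, hεg, hglb⟩, hgInt⟩ := hg
  obtain ⟨hβ01, ⟨hqUSC, εq, hεq, hqlb⟩, hβ0, hβ1, hqeq⟩ := heq
  have hX : MeasurableSet X := hXc.isClosed.measurableSet
  have hXfin : volume X < ⊤ := hXc.measure_lt_top
  have hXne : X.Nonempty := nonempty_of_measure_ne_zero hX0.ne'
  obtain ⟨Cp, hpub⟩ := usc_bddAbove hXc hpUSC
  obtain ⟨Cg, hgub⟩ := usc_bddAbove hXc hgUSC
  obtain ⟨Cq, hqub⟩ := usc_bddAbove hXc hqUSC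
  have hpm : AEMeasurable p (volume.restrict X) := usc_aemeasurable hX hpUSC
  have hgm : AEMeasurable g (volume.restrict X) := usc_aemeasurable hX hgUSC
  have hqm : AEMeasurable q (volume.restrict X) := usc_aemeasurable hX hqUSC
  have hppos : ∀ x ∈ X, 0 < p x := fun x hx => lt_of_lt_of_le hεp (hplb x hx)
  have hgpos : ∀ x ∈ X, 0 < g x := fun x hx => lt_of_lt_of_le hεg (hglb x hx)
  have hqpos : ∀ x ∈ X, 0 < q x := fun x hx => lt_of_lt_of_le hεq (hqlb x hx)
  set B := ∫ y in X, β y * p y with hBdef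
  -- shared tail
  have tail : (∀ x ∈ X, β x = 1) → (∀ x ∈ X, β x = 1) ∧ ∀ x ∈ X, q x = g x := by
    intro hall
    have hB1 : B = 1 := by
      rw [hBdef, setIntegral_congr_fun hX
        (fun y hy => by simp only [hall y hy, one_mul] : EqOn (fun y => β y * p y) p X)]
      exact hpInt
    exact ⟨hall, fun x hx => by rw [hqeq x hx, hall x hx, hB1]; ring⟩
  -- the γ = 1 degenerate case
  rcases eq_or_lt_of_le hγ.2 with hγ1 | hγlt
  · have hRev0 : ∀ y, Rev p α γ q y = 0 := by
      intro y; unfold Rev; rw [← hγ1]; ring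
    have hW : ∀ y, Wthr p α γ v w y q = (if v ≤ 0 then w else 0) := by
      intro y
      show (if v ≤ Rev p α γ q y then w else 0) = _
      rw [hRev0]
    have hRWg : RevWg X p g α γ (Wthr p α γ v w) q = (if v ≤ 0 then w else 0) := by
      unfold RevWg
      have hcg : EqOn (fun y => RevW p α γ (Wthr p α γ v w) q y * g y)
          (fun y => (if v ≤ (0:ℝ) then w else 0) * g y) X := by
        intro y _
        show (Rev p α γ q y + Wthr p α γ v w y q) * g y = _
        rw [hRev0, hW, zero_add]
      rw [setIntegral_congr_fun hX hcg, integral_const_mul, hgInt, mul_one]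
    apply tail
    intro x hx
    apply hβ1 x hx
    have hU : UtilW p α γ c (Wthr p α γ v w) q x =
        Rev p α γ q x + Wthr p α γ v w x q - c := rfl
    rw [hU, hRev0, hW, hRWg]
    linarith
  -- main case γ < 1
  have h1γpos : 0 < 1 - γ := by linarith
  have h1γ : 0 ≤ 1 - γ := h1γpos.le
  set M := sSup ((fun x => (p x / g x) ^ α) '' X) with hMdef
  set e : (Fin d → ℝ) → ℝ := fun x => q x - g x * B with hedef
  set Wf : (Fin d → ℝ) → ℝ := fun x => Wthr p α γ v w x q with hWfdef
  have hWfif : ∀ x, Wf x = if v ≤ (1 - γ) * (p x / q x) ^ α then w else 0 :=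
    fun x => rfl
  have heval : ∀ x, e x = q x - g x * B := fun _ => rfl
  have hRevW : ∀ x, RevW p α γ (Wthr p α γ v w) q x =
      (1 - γ) * (p x / q x) ^ α + Wf x := fun _ => rfl
  have hUtilW : ∀ x, UtilW p α γ c (Wthr p α γ v w) q x =
      (1 - γ) * (p x / q x) ^ α + Wf x - c := fun _ => rfl
  clear_value e Wf
  have hWf01 : ∀ x, 0 ≤ Wf x ∧ Wf x ≤ w := by
    intro x; rw [hWfif]; split
    · exact ⟨hw, le_refl w⟩
    · exact ⟨le_refl 0, hw⟩
  have he_eq : ∀ x ∈ X, e x = (1 - β x) * p x := by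
    intro x hx
    rw [heval x, hqeq x hx]; ring
  have henn : ∀ x ∈ X, 0 ≤ e x := by
    intro x hx
    rw [he_eq x hx]
    exact mul_nonneg (by linarith [(hβ01 x hx).2]) (hppos x hx).le
  have helep : ∀ x ∈ X, e x ≤ p x := by
    intro x hx
    rw [he_eq x hx]
    have := (hβ01 x hx).1
    nlinarith [(hppos x hx).le]
  -- pointwise facts about vf, rf
  have hvnn : ∀ x ∈ X, 0 ≤ (p x / q x) ^ α :=
    fun x hx => Real.rpow_nonneg (div_nonneg (hppos x hx).le (hqpos x hx).le) α
  have hrnn : ∀ x ∈ X, 0 ≤ (p x / g x) ^ α :=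
    fun x hx => Real.rpow_nonneg (div_nonneg (hppos x hx).le (hgpos x hx).le) α
  have hCpnn : 0 ≤ Cp := le_trans (hppos hXne.some hXne.some_mem).le (hpub _ hXne.some_mem)
  have hvub : ∀ x ∈ X, (p x / q x) ^ α ≤ (Cp / εq) ^ α := by
    intro x hx
    exact Real.rpow_le_rpow (div_nonneg (hppos x hx).le (hqpos x hx).le)
      (div_le_div₀ hCpnn (hpub x hx) hεq (hqlb x hx)) hα.1.le
  have hrub : ∀ x ∈ X, (p x / g x) ^ α ≤ (Cp / εg) ^ α := by
    intro x hx
    exact Real.rpow_le_rpow (div_nonneg (hppos x hx).le (hgpos x hx).le)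
      (div_le_div₀ hCpnn (hpub x hx) hεg (hglb x hx)) hα.1.le
  have hMub : ∀ x ∈ X, (p x / g x) ^ α ≤ M := by
    intro x hx
    apply le_csSup ⟨(Cp / εg) ^ α, ?_⟩ (mem_image_of_mem _ hx)
    rintro y ⟨z, hz, rfl⟩
    exact hrub z hz
  have hMnn : 0 ≤ M := le_trans (hrnn hXne.some hXne.some_mem) (hMub _ hXne.some_mem)
  -- measurability
  have hvm : AEMeasurable (fun x => (p x / q x) ^ α) (volume.restrict X) :=
    (Real.continuous_rpow_const hα.1.le).measurable.comp_aemeasurable (hpm.div hqm)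
  have hrm : AEMeasurable (fun x => (p x / g x) ^ α) (volume.restrict X) :=
    (Real.continuous_rpow_const hα.1.le).measurable.comp_aemeasurable (hpm.div hgm)
  have hWm : AEMeasurable Wf (volume.restrict X) := by
    rw [funext hWfif]
    exact aemeasurable_ite_le (hvm.const_mul (1 - γ)) v w
  have hem : AEMeasurable e (volume.restrict X) := by
    rw [hedef]
    exact hqm.sub (hgm.mul_const B)
  -- integrability
  have hp_int : IntegrableOn p X := by
    apply integrableOn_of_bound hX hXfin hpm Cp
    intro x hx; rw [abs_of_nonneg (hppos x hx).le]; exact hpub x hx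
  have hg_int : IntegrableOn g X := by
    apply integrableOn_of_bound hX hXfin hgm Cg
    intro x hx; rw [abs_of_nonneg (hgpos x hx).le]; exact hgub x hx
  have he_int : IntegrableOn e X := by
    apply integrableOn_of_bound hX hXfin hem Cp
    intro x hx
    rw [abs_of_nonneg (henn x hx)]
    exact le_trans (helep x hx) (hpub x hx)
  have hve_int : IntegrableOn (fun x => (p x / q x) ^ α * e x) X := by
    apply integrableOn_of_bound hX hXfin (hvm.mul hem) ((Cp / εq) ^ α * Cp)
    intro x hx
    simp only [Pi.mul_apply]
    rw [abs_of_nonneg (mul_nonneg (hvnn x hx) (henn x hx))]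
    exact mul_le_mul (hvub x hx) (le_trans (helep x hx) (hpub x hx)) (henn x hx)
      (le_trans (hvnn x hx) (hvub x hx))
  have hvg_int : IntegrableOn (fun x => (p x / q x) ^ α * g x) X := by
    apply integrableOn_of_bound hX hXfin (hvm.mul hgm) ((Cp / εq) ^ α * Cg)
    intro x hx
    simp only [Pi.mul_apply]
    rw [abs_of_nonneg (mul_nonneg (hvnn x hx) (hgpos x hx).le)]
    exact mul_le_mul (hvub x hx) (hgub x hx) (hgpos x hx).le
      (le_trans (hvnn x hx) (hvub x hx))
  have hre_int : IntegrableOn (fun x => (p x / g x) ^ α * e x) X := by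
    apply integrableOn_of_bound hX hXfin (hrm.mul hem) ((Cp / εg) ^ α * Cp)
    intro x hx
    simp only [Pi.mul_apply]
    rw [abs_of_nonneg (mul_nonneg (hrnn x hx) (henn x hx))]
    exact mul_le_mul (hrub x hx) (le_trans (helep x hx) (hpub x hx)) (henn x hx)
      (le_trans (hrnn x hx) (hrub x hx))
  have hrg_int : IntegrableOn (fun x => (p x / g x) ^ α * g x) X := by
    apply integrableOn_of_bound hX hXfin (hrm.mul hgm) ((Cp / εg) ^ α * Cg)
    intro x hx
    simp only [Pi.mul_apply]
    rw [abs_of_nonneg (mul_nonneg (hrnn x hx) (hgpos x hx).le)]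
    exact mul_le_mul (hrub x hx) (hgub x hx) (hgpos x hx).le
      (le_trans (hrnn x hx) (hrub x hx))
  have hWe_int : IntegrableOn (fun x => Wf x * e x) X := by
    apply integrableOn_of_bound hX hXfin (hWm.mul hem) (w * Cp)
    intro x hx
    simp only [Pi.mul_apply]
    rw [abs_of_nonneg (mul_nonneg (hWf01 x).1 (henn x hx))]
    exact mul_le_mul (hWf01 x).2 (le_trans (helep x hx) (hpub x hx)) (henn x hx) hw
  have hWg_int : IntegrableOn (fun x => Wf x * g x) X := by
    apply integrableOn_of_bound hX hXfin (hWm.mul hgm) (w * Cg)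
    intro x hx
    simp only [Pi.mul_apply]
    rw [abs_of_nonneg (mul_nonneg (hWf01 x).1 (hgpos x hx).le)]
    exact mul_le_mul (hWf01 x).2 (hgub x hx) (hgpos x hx).le hw
  -- A and B
  set A := ∫ x in X, e x with hAdef
  clear_value A
  have hBalt : B = 1 - A := by
    have hcg : EqOn (fun y => β y * p y) (fun y => p y - e y) X := by
      intro y hy
      show β y * p y = p y - e y
      rw [he_eq y hy]; ring
    rw [hBdef, setIntegral_congr_fun hX hcg, integral_sub hp_int he_int, hpInt,
      ← hAdef]
  have hAnn : 0 ≤ A := by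
    rw [hAdef]
    exact setIntegral_nonneg hX henn
  have hA1 : A ≤ 1 := by
    have := setIntegral_mono_on he_int hp_int hX helep
    rw [hpInt] at this
    rw [hAdef]
    exact this
  -- notation for the main integrals
  set R := RevWg X p g α γ (Wthr p α γ v w) q with hRdef0
  set Iv_e := ∫ x in X, (p x / q x) ^ α * e x with hIve
  set Iv_g := ∫ x in X, (p x / q x) ^ α * g x with hIvg
  set Jr_e := ∫ x in X, (p x / g x) ^ α * e x with hJre
  set Jr_g := ∫ x in X, (p x / g x) ^ α * g x with hJrg
  set WG := ∫ x in X, Wf x * g x with hWG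
  set We := ∫ x in X, Wf x * e x with hWe
  clear_value R Iv_e Iv_g Jr_e Jr_g WG We
  -- R in terms of the pieces
  have hRdef : R = (1 - γ) * Iv_g + WG := by
    rw [hRdef0]
    unfold RevWg
    have hcg : EqOn (fun y => RevW p α γ (Wthr p α γ v w) q y * g y)
        (fun y => (1 - γ) * ((p y / q y) ^ α * g y) + Wf y * g y) X := by
      intro y _
      show RevW p α γ (Wthr p α γ v w) q y * g y =
        (1 - γ) * ((p y / q y) ^ α * g y) + Wf y * g y
      rw [hRevW y]; ring
    rw [setIntegral_congr_fun hX hcg,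
      integral_add (hvg_int.const_mul (1 - γ)) hWg_int, integral_const_mul,
      ← hIvg, ← hWG]
  -- consequences of hmin
  have hminv : (1 - γ) * M ≤ v := le_trans hmin (min_le_right _ _)
  have hminc : (1 - γ) * M ≤ (1 - γ) * Jr_g + c := le_trans hmin (min_le_left _ _)
  -- equilibrium condition
  have h2 : ∀ x ∈ X, β x ≠ 1 → R + c ≤ (1 - γ) * (p x / q x) ^ α + Wf x := by
    intro x hx hne
    have := mt (hβ1 x hx) hne
    rw [hUtilW x] at this
    rw [not_lt] at this
    linarith
  -- integrated equilibrium condition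
  have h3 : (R + c) * A ≤ (1 - γ) * Iv_e + We := by
    have hsum_int : IntegrableOn
        (fun x => ((1 - γ) * (p x / q x) ^ α + Wf x) * e x) X := by
      have hcg : (fun x => ((1 - γ) * (p x / q x) ^ α + Wf x) * e x) =
          (fun x => (1 - γ) * ((p x / q x) ^ α * e x) + Wf x * e x) :=
        funext fun x => by ring
      rw [hcg]
      exact (hve_int.const_mul (1 - γ)).add hWe_int
    have hmono : (R + c) * A ≤
        ∫ x in X, ((1 - γ) * (p x / q x) ^ α + Wf x) * e x := by
      rw [hAdef, ← integral_const_mul]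
      apply setIntegral_mono_on (he_int.const_mul (R + c)) hsum_int hX
      intro x hx
      by_cases hbx : β x = 1
      · have he0 : e x = 0 := by rw [he_eq x hx, hbx]; ring
        simp [he0]
      · exact mul_le_mul_of_nonneg_right (h2 x hx hbx) (henn x hx)
    have hsplit : (∫ x in X, ((1 - γ) * (p x / q x) ^ α + Wf x) * e x) =
        (1 - γ) * Iv_e + We := by
      have hcg : (fun x => ((1 - γ) * (p x / q x) ^ α + Wf x) * e x) =
          (fun x => (1 - γ) * ((p x / q x) ^ α * e x) + Wf x * e x) :=
        funext fun x => by ring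
      rw [hcg, integral_add (hve_int.const_mul (1 - γ)) hWe_int, integral_const_mul,
        ← hIve, ← hWe]
    rw [hsplit] at hmono
    exact hmono
  -- the W-term comparison
  have hqleg : ∀ x ∈ X, v ≤ (1 - γ) * (p x / q x) ^ α → q x ≤ g x := by
    intro x hx hvx
    have hrv : (p x / g x) ^ α ≤ (p x / q x) ^ α := by
      have h1 : (1 - γ) * (p x / g x) ^ α ≤ (1 - γ) * (p x / q x) ^ α :=
        le_trans (le_trans (mul_le_mul_of_nonneg_left (hMub x hx) h1γ) hminv) hvx
      exact (mul_le_mul_iff_of_pos_left h1γpos).1 h1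
    have hdiv : p x / g x ≤ p x / q x := by
      by_contra hlt
      rw [not_le] at hlt
      exact absurd (Real.rpow_lt_rpow (div_nonneg (hppos x hx).le (hqpos x hx).le)
        hlt hα.1) (not_lt.2 hrv)
    have := (div_le_div_iff₀ (hgpos x hx) (hqpos x hx)).1 hdiv
    exact le_of_mul_le_mul_left (by linarith) (hppos x hx)
  have h4 : We ≤ A * WG := by
    rw [hWe, hWG, ← integral_const_mul]
    apply setIntegral_mono_on hWe_int ((hWg_int).const_mul A) hX
    intro x hx
    rw [hWfif x]
    by_cases hvx : v ≤ (1 - γ) * (p x / q x) ^ α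
    · rw [if_pos hvx]
      have heAg : e x ≤ A * g x := by
        have hqg := hqleg x hx hvx
        rw [heval x, hBalt]
        nlinarith
      calc w * e x ≤ w * (A * g x) := mul_le_mul_of_nonneg_left heAg hw
        _ = A * (w * g x) := by ring
    · rw [if_neg hvx]
      simp
  -- main integrated inequality
  have h5 : c * A ≤ (1 - γ) * (Iv_e - A * Iv_g) := by
    have hexp : (R + c) * A = (1 - γ) * Iv_g * A + WG * A + c * A := by
      rw [hRdef]; ring
    rw [hexp] at h3
    nlinarith
  -- S values
  have hqge : ∀ x ∈ X, q x - g x = e x - A * g x := by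
    intro x hx
    rw [heval x, hBalt]; ring
  have hS2_int : IntegrableOn (fun x => (p x / q x) ^ α * (q x - g x)) X := by
    have hcg : EqOn (fun x => (p x / q x) ^ α * (q x - g x))
        (fun x => (p x / q x) ^ α * e x - A * ((p x / q x) ^ α * g x)) X := by
      intro x hx
      show (p x / q x) ^ α * (q x - g x) = _
      rw [hqge x hx]; ring
    exact (IntegrableOn.congr_fun ((hve_int).sub (hvg_int.const_mul A))
      (fun x hx => (hcg hx).symm) hX)
  have hS1_int : IntegrableOn (fun x => (p x / g x) ^ α * (q x - g x)) X := by
    have hcg : EqOn (fun x => (p x / g x) ^ α * (q x - g x))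
        (fun x => (p x / g x) ^ α * e x - A * ((p x / g x) ^ α * g x)) X := by
      intro x hx
      show (p x / g x) ^ α * (q x - g x) = _
      rw [hqge x hx]; ring
    exact (IntegrableOn.congr_fun ((hre_int).sub (hrg_int.const_mul A))
      (fun x hx => (hcg hx).symm) hX)
  have hS2 : (∫ x in X, (p x / q x) ^ α * (q x - g x)) = Iv_e - A * Iv_g := by
    have hcg : EqOn (fun x => (p x / q x) ^ α * (q x - g x))
        (fun x => (p x / q x) ^ α * e x - A * ((p x / q x) ^ α * g x)) X := by
      intro x hx
      show (p x / q x) ^ α * (q x - g x) = _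
      rw [hqge x hx]; ring
    rw [setIntegral_congr_fun hX hcg,
      integral_sub hve_int (hvg_int.const_mul A), integral_const_mul, ← hIve, ← hIvg]
  have hS1 : (∫ x in X, (p x / g x) ^ α * (q x - g x)) = Jr_e - A * Jr_g := by
    have hcg : EqOn (fun x => (p x / g x) ^ α * (q x - g x))
        (fun x => (p x / g x) ^ α * e x - A * ((p x / g x) ^ α * g x)) X := by
      intro x hx
      show (p x / g x) ^ α * (q x - g x) = _
      rw [hqge x hx]; ring
    rw [setIntegral_congr_fun hX hcg,
      integral_sub hre_int (hrg_int.const_mul A), integral_const_mul, ← hJre, ← hJrg]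
  -- pointwise positivity of the key integrand
  have hf1nn : ∀ x ∈ X,
      0 ≤ ((p x / g x) ^ α - (p x / q x) ^ α) * (q x - g x) := by
    intro x hx
    rcases lt_trichotomy (q x) (g x) with hlt | heqx | hgt
    · have hdiv : p x / g x < p x / q x :=
        div_lt_div_of_pos_left (hppos x hx) (hqpos x hx) hlt
      have hpow : (p x / g x) ^ α < (p x / q x) ^ α :=
        Real.rpow_lt_rpow (div_nonneg (hppos x hx).le (hgpos x hx).le) hdiv hα.1
      exact le_of_lt (mul_pos_of_neg_of_neg (by linarith) (by linarith))
    · rw [heqx]; simp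
    · have hdiv : p x / q x < p x / g x :=
        div_lt_div_of_pos_left (hppos x hx) (hgpos x hx) hgt
      have hpow : (p x / q x) ^ α < (p x / g x) ^ α :=
        Real.rpow_lt_rpow (div_nonneg (hppos x hx).le (hqpos x hx).le) hdiv hα.1
      exact le_of_lt (mul_pos (by linarith) (by linarith))
  have hf1_int : IntegrableOn
      (fun x => ((p x / g x) ^ α - (p x / q x) ^ α) * (q x - g x)) X := by
    have hcg : (fun x => ((p x / g x) ^ α - (p x / q x) ^ α) * (q x - g x)) =
        (fun x => (p x / g x) ^ α * (q x - g x) - (p x / q x) ^ α * (q x - g x)) :=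
      funext fun x => by ring
    rw [hcg]
    exact hS1_int.sub hS2_int
  have hf1split : (∫ x in X, ((p x / g x) ^ α - (p x / q x) ^ α) * (q x - g x)) =
      (Jr_e - A * Jr_g) - (Iv_e - A * Iv_g) := by
    have hcg : (fun x => ((p x / g x) ^ α - (p x / q x) ^ α) * (q x - g x)) =
        (fun x => (p x / g x) ^ α * (q x - g x) - (p x / q x) ^ α * (q x - g x)) :=
      funext fun x => by ring
    rw [hcg, integral_sub hS1_int hS2_int, hS1, hS2]
  have hS1geS2 : Iv_e - A * Iv_g ≤ Jr_e - A * Jr_g := by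
    have h0 : 0 ≤ ∫ x in X, ((p x / g x) ^ α - (p x / q x) ^ α) * (q x - g x) :=
      setIntegral_nonneg hX hf1nn
    rw [hf1split] at h0
    linarith
  -- Jr_e ≤ A * M
  have hJAM : Jr_e ≤ A * M := by
    have hmono := setIntegral_mono_on hre_int (he_int.const_mul M) hX
      (fun x hx => mul_le_mul_of_nonneg_right (hMub x hx) (henn x hx))
    rw [integral_const_mul, ← hAdef] at hmono
    rw [hJre]
    calc (∫ x in X, (p x / g x) ^ α * e x) ≤ M * A := hmono
      _ = A * M := by ring
  -- the chain of inequalities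
  have hk1 : A * (M - Jr_g) ≤ Iv_e - A * Iv_g := by
    have hc1 : (1 - γ) * (M - Jr_g) ≤ c := by linarith
    have hc2 : A * ((1 - γ) * (M - Jr_g)) ≤ A * c :=
      mul_le_mul_of_nonneg_left hc1 hAnn
    have : (1 - γ) * (A * (M - Jr_g)) ≤ (1 - γ) * (Iv_e - A * Iv_g) := by
      nlinarith
    exact (mul_le_mul_iff_of_pos_left h1γpos).1 this
  have hallEq : Jr_e = A * M ∧ (Jr_e - A * Jr_g) - (Iv_e - A * Iv_g) = 0 := by
    constructor <;> linarith
  -- split on A = 0 or A > 0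
  rcases eq_or_lt_of_le hAnn with hA0 | hApos
  · -- A = 0 : all equilibria are pure-AI
    have hB1 : B = 1 := by rw [hBalt, ← hA0]; ring
    have he0 : e =ᵐ[volume.restrict X] 0 := by
      have h0 : (∫ x in X, e x) = 0 := by rw [← hAdef, ← hA0]
      exact (integral_eq_zero_iff_of_nonneg_ae
        ((ae_restrict_iff' hX).2 (Eventually.of_forall henn)) he_int).1 h0
    have hqg_ae : ∀ᵐ x ∂(volume.restrict X), x ∈ X → q x = g x := by
      filter_upwards [he0] with x hex hxX
      have : q x - g x * B = 0 := by rw [← heval x]; exact hex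
      rw [hB1] at this
      linarith
    have hIveq : Iv_g = Jr_g := by
      rw [hIvg, hJrg]
      apply setIntegral_congr_ae hX
      rw [← ae_restrict_iff' hX]
      filter_upwards [hqg_ae, ae_restrict_mem hX] with x hqx hxX
      rw [hqx hxX]
    have hWGnn : 0 ≤ WG := by
      rw [hWG]
      exact setIntegral_nonneg hX fun x hx => mul_nonneg (hWf01 x).1 (hgpos x hx).le
    have hRge : (1 - γ) * Jr_g ≤ R := by
      rw [hRdef, hIveq]; linarith
    apply tail
    intro x hx
    by_contra hbne
    have hgq : g x < q x := by
      have h1 : q x = (1 - β x) * p x + g x := by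
        rw [hqeq x hx, hB1, mul_one]
      have h2 : 0 < (1 - β x) * p x := by
        have hb1 : β x ≤ 1 := (hβ01 x hx).2
        have hnn : (0:ℝ) ≤ 1 - β x := by linarith
        have hlt : (0:ℝ) < 1 - β x :=
          lt_of_le_of_ne hnn fun hh => hbne (by linarith)
        exact mul_pos hlt (hppos x hx)
      linarith
    have hvlt : (p x / q x) ^ α < (p x / g x) ^ α :=
      Real.rpow_lt_rpow (div_nonneg (hppos x hx).le (hqpos x hx).le)
        (div_lt_div_of_pos_left (hppos x hx) (hgpos x hx) hgq) hα.1
    have hRevlt : (1 - γ) * (p x / q x) ^ α < (1 - γ) * M :=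
      mul_lt_mul_of_pos_left (lt_of_lt_of_le hvlt (hMub x hx)) h1γpos
    have hW0 : Wf x = 0 := by
      rw [hWfif x, if_neg (not_le.2 (lt_of_lt_of_le hRevlt hminv))]
    have hUlt : UtilW p α γ c (Wthr p α γ v w) q x < R := by
      rw [hUtilW x, hW0]
      linarith
    exact hbne (hβ1 x hx hUlt)
  · -- A > 0 : contradiction
    exfalso
    have hf1ae : ∀ᵐ x ∂(volume.restrict X),
        ((p x / g x) ^ α - (p x / q x) ^ α) * (q x - g x) = 0 := by
      have h0 : (∫ x in X, ((p x / g x) ^ α - (p x / q x) ^ α) * (q x - g x)) = 0 := by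
        rw [hf1split]; exact hallEq.2
      have := (integral_eq_zero_iff_of_nonneg_ae
        ((ae_restrict_iff' hX).2 (Eventually.of_forall hf1nn)) hf1_int).1 h0
      filter_upwards [this] with x hx
      exact hx
    have hf2nn : ∀ x ∈ X, 0 ≤ (M - (p x / g x) ^ α) * e x := fun x hx =>
      mul_nonneg (by linarith [hMub x hx]) (henn x hx)
    have hf2_int : IntegrableOn (fun x => (M - (p x / g x) ^ α) * e x) X := by
      have hcg : (fun x => (M - (p x / g x) ^ α) * e x) =
          (fun x => M * e x - (p x / g x) ^ α * e x) := funext fun x => by ring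
      rw [hcg]
      exact (he_int.const_mul M).sub hre_int
    have hf2ae : ∀ᵐ x ∂(volume.restrict X),
        (M - (p x / g x) ^ α) * e x = 0 := by
      have h0 : (∫ x in X, (M - (p x / g x) ^ α) * e x) = 0 := by
        have hcg : (fun x => (M - (p x / g x) ^ α) * e x) =
            (fun x => M * e x - (p x / g x) ^ α * e x) := funext fun x => by ring
        rw [hcg, integral_sub (he_int.const_mul M) hre_int, integral_const_mul,
          ← hAdef, ← hJre, hallEq.1]
        ring
      have := (integral_eq_zero_iff_of_nonneg_ae
        ((ae_restrict_iff' hX).2 (Eventually.of_forall hf2nn)) hf2_int).1 h0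
      filter_upwards [this] with x hx
      exact hx
    have hkey : ∀ᵐ x ∂(volume.restrict X),
        x ∈ X ∧ q x = g x ∧ (p x / g x) ^ α = M := by
      filter_upwards [hf1ae, hf2ae, ae_restrict_mem hX] with x h1 h2 hxX
      have hqgx : q x = g x := by
        by_contra hne
        rcases lt_or_gt_of_ne hne with hlt | hgt
        · have hdiv : p x / g x < p x / q x :=
            div_lt_div_of_pos_left (hppos x hxX) (hqpos x hxX) hlt
          have hpow : (p x / g x) ^ α < (p x / q x) ^ α :=
            Real.rpow_lt_rpow (div_nonneg (hppos x hxX).le (hgpos x hxX).le)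
              hdiv hα.1
          have : 0 < ((p x / g x) ^ α - (p x / q x) ^ α) * (q x - g x) :=
            mul_pos_of_neg_of_neg (by linarith) (by linarith)
          linarith [h1, this]
        · have hdiv : p x / q x < p x / g x :=
            div_lt_div_of_pos_left (hppos x hxX) (hgpos x hxX) hgt
          have hpow : (p x / q x) ^ α < (p x / g x) ^ α :=
            Real.rpow_lt_rpow (div_nonneg (hppos x hxX).le (hqpos x hxX).le)
              hdiv hα.1
          have : 0 < ((p x / g x) ^ α - (p x / q x) ^ α) * (q x - g x) :=
            mul_pos (by linarith) (by linarith)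
          linarith [h1, this]
      have heAg : e x = A * g x := by
        rw [heval x, hqgx, hBalt]; ring
      have hepos : 0 < e x := by
        rw [heAg]
        exact mul_pos hApos (hgpos x hxX)
      have hrM : (p x / g x) ^ α = M := by
        rcases mul_eq_zero.1 h2 with h' | h'
        · linarith
        · exact absurd h' hepos.ne'
      exact ⟨hxX, hqgx, hrM⟩
    have hne : volume.restrict X ≠ 0 := by
      rw [Ne, Measure.restrict_eq_zero]
      exact hX0.ne'
    haveI : (ae (volume.restrict X)).NeBot := ae_neBot.2 hne
    obtain ⟨x0, hx0X, hq0, hr0⟩ := hkey.exists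
    have hv0M : (p x0 / q x0) ^ α = M := by rw [hq0, hr0]
    have hβx0 : β x0 ≠ 1 := by
      intro hb1
      have he0 : e x0 = 0 := by rw [he_eq x0 hx0X, hb1]; ring
      have heAg : e x0 = A * g x0 := by
        rw [heval x0, hq0, hBalt]; ring
      have := mul_pos hApos (hgpos x0 hx0X)
      rw [← heAg] at this
      linarith
    have hUx0 := h2 x0 hx0X hβx0
    rw [hv0M] at hUx0
    by_cases hvM : v ≤ (1 - γ) * M
    · -- everyone gets the bonus a.e.
      have hRcomp : R = (1 - γ) * M + w := by
        rw [hRdef0]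
        unfold RevWg
        have hcg : ∀ᵐ x ∂volume, x ∈ X →
            RevW p α γ (Wthr p α γ v w) q x * g x = ((1 - γ) * M + w) * g x := by
          rw [← ae_restrict_iff' hX]
          filter_upwards [hkey] with x hk
          obtain ⟨hxX, hqx, hrx⟩ := hk
          have hvx : (p x / q x) ^ α = M := by rw [hqx, hrx]
          rw [hRevW x, hvx, hWfif x, hvx, if_pos hvM]
        rw [setIntegral_congr_ae hX hcg, integral_const_mul, hgInt, mul_one]
      have hWle : Wf x0 ≤ w := (hWf01 x0).2
      rw [hRcomp] at hUx0
      linarith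
    · -- nobody gets the bonus a.e.
      have hRcomp : R = (1 - γ) * M := by
        rw [hRdef0]
        unfold RevWg
        have hcg : ∀ᵐ x ∂volume, x ∈ X →
            RevW p α γ (Wthr p α γ v w) q x * g x = ((1 - γ) * M) * g x := by
          rw [← ae_restrict_iff' hX]
          filter_upwards [hkey] with x hk
          obtain ⟨hxX, hqx, hrx⟩ := hk
          have hvx : (p x / q x) ^ α = M := by rw [hqx, hrx]
          rw [hRevW x, hvx, hWfif x, hvx, if_neg hvM, add_zero]
        rw [setIntegral_congr_ae hX hcg, integral_const_mul, hgInt, mul_one]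
      have hW0 : Wf x0 = 0 := by
        rw [hWfif x0, hv0M, if_neg hvM]
      rw [hRcomp, hW0] at hUx0
      linarith




private lemma part2 {d : ℕ} {X : Set (Fin d → ℝ)}
    (hXc : IsCompact X) (hX0 : 0 < volume X)
    {p g : (Fin d → ℝ) → ℝ} (hp : p ∈ PSet X) (hg : g ∈ PSet X)
    {α γ c : ℝ} (hα : α ∈ Ioo (0 : ℝ) 1) (hγ : γ ∈ Icc (0 : ℝ) 1) (hc : 0 < c)
    {v w : ℝ} (hv : 0 ≤ v) (hw : 0 ≤ w)
    (hmin : (1 - γ) * sSup ((fun x => (p x / g x) ^ α) '' X) ≤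
      min ((1 - γ) * (∫ x in X, (p x / g x) ^ α * g x) + c) v)
    (hcase : (1 - γ) * sSup ((fun x => (p x / g x) ^ α) '' X) <
        min ((1 - γ) * (∫ x in X, (p x / g x) ^ α * g x) + c) v ∨
      v + w ≤ (1 - γ) * (∫ x in X, (p x / g x) ^ α * g x) + c) :
    IsEquilibrium X p g α γ c (Wthr p α γ v w) (fun _ => 1) g := by
  obtain ⟨⟨hpUSC, εp, hεp, hplb⟩, hpInt⟩ := hp
  obtain ⟨⟨hgUSC, εg, hεg, hglb⟩, hgInt⟩ := hg
  have hX : MeasurableSet X := hXc.isClosed.measurableSet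
  have hXfin : volume X < ⊤ := hXc.measure_lt_top
  have hXne : X.Nonempty := nonempty_of_measure_ne_zero hX0.ne'
  obtain ⟨Cp, hpub⟩ := usc_bddAbove hXc hpUSC
  obtain ⟨Cg, hgub⟩ := usc_bddAbove hXc hgUSC
  have hpm : AEMeasurable p (volume.restrict X) := usc_aemeasurable hX hpUSC
  have hgm : AEMeasurable g (volume.restrict X) := usc_aemeasurable hX hgUSC
  have hppos : ∀ x ∈ X, 0 < p x := fun x hx => lt_of_lt_of_le hεp (hplb x hx)
  have hgpos : ∀ x ∈ X, 0 < g x := fun x hx => lt_of_lt_of_le hεg (hglb x hx)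
  have h1γ : 0 ≤ 1 - γ := by linarith [hγ.2]
  set M := sSup ((fun x => (p x / g x) ^ α) '' X) with hM
  set rf : (Fin d → ℝ) → ℝ := fun x => (p x / g x) ^ α with hrf
  -- bound on rf
  have hrfnn : ∀ x ∈ X, 0 ≤ rf x := fun x hx =>
    Real.rpow_nonneg (div_nonneg (hppos x hx).le (hgpos x hx).le) α
  have hCp : ∀ x ∈ X, p x ≤ Cp := hpub
  have hrfub : ∀ x ∈ X, rf x ≤ (Cp / εg) ^ α := by
    intro x hx
    apply Real.rpow_le_rpow (div_nonneg (hppos x hx).le (hgpos x hx).le)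
      (div_le_div₀ (le_trans (hppos x hx).le (hpub x hx)) (hpub x hx) hεg (hglb x hx))
      hα.1.le
  have hMub : ∀ x ∈ X, rf x ≤ M := by
    intro x hx
    apply le_csSup ⟨(Cp / εg) ^ α, ?_⟩ (mem_image_of_mem _ hx)
    rintro y ⟨z, hz, rfl⟩
    exact hrfub z hz
  -- measurability
  have hrm : AEMeasurable rf (volume.restrict X) :=
    (Real.continuous_rpow_const hα.1.le).measurable.comp_aemeasurable (hpm.div hgm)
  have hWm : AEMeasurable (fun x => Wthr p α γ v w x g) (volume.restrict X) := by
    have := aemeasurable_ite_le (hrm.const_mul (1 - γ)) v w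
    exact this
  -- integrability
  have hrg_int : IntegrableOn (fun x => rf x * g x) X := by
    apply integrableOn_of_bound hX hXfin (hrm.mul hgm) ((Cp / εg) ^ α * Cg)
    intro x hx
    simp only [Pi.mul_apply]
    rw [abs_of_nonneg (mul_nonneg (hrfnn x hx) (hgpos x hx).le)]
    refine mul_le_mul (hrfub x hx) (hgub x hx) (hgpos x hx).le ?_
    exact Real.rpow_nonneg (div_nonneg (le_trans (hppos x hx).le (hpub x hx)) hεg.le) α
  have hWrev_int : IntegrableOn
      (fun y => RevW p α γ (Wthr p α γ v w) g y * g y) X := by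
    apply integrableOn_of_bound hX hXfin
      (((((hrm.const_mul (1 - γ))).add hWm).mul hgm)) (((1-γ) * ((Cp / εg) ^ α) + w) * Cg)
    · intro x hx
      have hWx : Wthr p α γ v w x g = w ∨ Wthr p α γ v w x g = 0 := by
        unfold Wthr; split <;> simp
      have h0W : 0 ≤ Wthr p α γ v w x g ∧ Wthr p α γ v w x g ≤ w := by
        rcases hWx with h | h <;> rw [h] <;> exact ⟨by linarith, by linarith⟩
      have hrev : RevW p α γ (Wthr p α γ v w) g x =
          (1 - γ) * rf x + Wthr p α γ v w x g := rfl
      have hnn : 0 ≤ (1 - γ) * rf x + Wthr p α γ v w x g :=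
        add_nonneg (mul_nonneg h1γ (hrfnn x hx)) h0W.1
      simp only [Pi.mul_apply, Pi.add_apply]
      rw [abs_of_nonneg (mul_nonneg hnn (hgpos x hx).le)]
      apply mul_le_mul _ (hgub x hx) (hgpos x hx).le
      · exact le_trans hnn (add_le_add (mul_le_mul_of_nonneg_left (hrfub x hx) h1γ) h0W.2)
      · exact add_le_add (mul_le_mul_of_nonneg_left (hrfub x hx) h1γ) h0W.2
  -- RevWg lower bound
  have hRge : (1 - γ) * (∫ x in X, rf x * g x) ≤
      RevWg X p g α γ (Wthr p α γ v w) g := by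
    unfold RevWg
    rw [← integral_const_mul]
    apply setIntegral_mono_on (hrg_int.const_mul _) hWrev_int hX
    intro x hx
    have hrev : RevW p α γ (Wthr p α γ v w) g x =
        (1 - γ) * rf x + Wthr p α γ v w x g := rfl
    have h0W : 0 ≤ Wthr p α γ v w x g := by
      unfold Wthr; split
      · exact hw
      · exact le_refl 0
    rw [hrev]
    nlinarith [(hgpos x hx).le, mul_nonneg h0W (hgpos x hx).le]
  set R := RevWg X p g α γ (Wthr p α γ v w) g with hR
  have hJ : (∫ x in X, (p x / g x) ^ α * g x) = ∫ x in X, rf x * g x := rfl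
  have hUtil : ∀ x ∈ X, UtilW p α γ c (Wthr p α γ v w) g x ≤ R := by
    intro x hx
    have hutil : UtilW p α γ c (Wthr p α γ v w) g x =
        (1 - γ) * rf x + Wthr p α γ v w x g - c := rfl
    have hrfM : (1 - γ) * rf x ≤ (1 - γ) * M :=
      mul_le_mul_of_nonneg_left (hMub x hx) h1γ
    rcases hcase with hs | hvw
    · rw [lt_min_iff, hJ] at hs
      have hW0 : Wthr p α γ v w x g = 0 := by
        show (if v ≤ Rev p α γ g x then w else 0) = 0
        rw [if_neg]
        show ¬ v ≤ (1 - γ) * (p x / g x) ^ α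
        exact not_le.2 (lt_of_le_of_lt hrfM hs.2)
      rw [hutil, hW0]
      linarith [hs.1, hRge]
    · rw [hJ] at hvw
      have hminv : (1 - γ) * M ≤ v := le_trans hmin (min_le_right _ _)
      have hminc : (1 - γ) * M ≤ (1 - γ) * (∫ x in X, rf x * g x) + c := by
        have := le_trans hmin (min_le_left _ _)
        rwa [hJ] at this
      rw [hutil]
      by_cases hWx : v ≤ Rev p α γ g x
      · have hWw : Wthr p α γ v w x g = w := by
          show (if v ≤ Rev p α γ g x then w else 0) = w
          rw [if_pos hWx]
        have hrev : Rev p α γ g x = (1 - γ) * rf x := rfl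
        rw [hWw]
        have : (1 - γ) * rf x ≤ v := by
          rw [← hrev] at hrfM ⊢
          exact le_trans hrfM hminv
        linarith [hRge]
      · have hW0 : Wthr p α γ v w x g = 0 := by
          show (if v ≤ Rev p α γ g x then w else 0) = 0
          rw [if_neg hWx]
        rw [hW0]
        linarith [hRge]
  refine ⟨fun x _ => ⟨by norm_num, le_refl 1⟩, ⟨hgUSC, εg, hεg, hglb⟩, ?_, ?_, ?_⟩
  · intro x hx hlt
    exact absurd hlt (not_lt.2 (hUtil x hx))
  · intro x hx _
    rfl
  · intro x hx
    have : (∫ y in X, (1 : ℝ) * p y) = 1 := by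
      rw [show (fun y => (1:ℝ) * p y) = p from funext fun y => one_mul _]
      exact hpInt
    rw [this]
    ring


/-- Proposition 3, "Pure-AI platform", forward direction. -/
theorem stmt16 {d : ℕ} (hd : 1 ≤ d) (X : Set (Fin d → ℝ))
    (hXc : IsCompact X) (hX0 : 0 < volume X)
    (p g : (Fin d → ℝ) → ℝ) (hp : p ∈ PSet X) (hg : g ∈ PSet X)
    (α γ c : ℝ) (hα : α ∈ Ioo (0 : ℝ) 1) (hγ : γ ∈ Icc (0 : ℝ) 1) (hc : 0 < c)
    (hsupp : ∃ a b : ℝ, 0 < a ∧ pushR X p g (Icc a b)ᶜ = 0)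
    (hdecomp : ∃ (μac : Measure ℝ) (s : Finset ℝ) (m : ℝ → ℝ≥0∞),
      μac ≪ volume ∧ pushR X p g = μac + ∑ i ∈ s, m i • Measure.dirac i)
    (v w : ℝ) (hv : 0 ≤ v) (hw : 0 ≤ w)
    (hmin : (1 - γ) * sSup ((fun x => (p x / g x) ^ α) '' X) ≤
      min ((1 - γ) * (∫ x in X, (p x / g x) ^ α * g x) + c) v) :
    (∀ β q : (Fin d → ℝ) → ℝ,
      IsEquilibrium X p g α γ c (Wthr p α γ v w) β q →
      (∀ x ∈ X, β x = 1) ∧ ∀ x ∈ X, q x = g x) ∧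
    (((1 - γ) * sSup ((fun x => (p x / g x) ^ α) '' X) <
        min ((1 - γ) * (∫ x in X, (p x / g x) ^ α * g x) + c) v ∨
      v + w ≤ (1 - γ) * (∫ x in X, (p x / g x) ^ α * g x) + c) →
      IsEquilibrium X p g α γ c (Wthr p α γ v w) (fun _ => 1) g) := by
  constructor
  · intro β q heq
    exact part1 hXc hX0 hp hg hα hγ hc hv hw hmin β q heq
  · intro hcase
    exact part2 hXc hX0 hp hg hα hγ hc hv hw hmin hcase

end GenAIPlatform
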